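/- arXiv:2307.03792 — 2 statements merged into one kernel-verified Lean document; each statement's English description precedes it below -/
import Mathlib

section
/- For all integers l ≥ 2 and m ≥ 2l−1, the Eulerian numbers satisfy A(m, l−1) ≤ c_{m+1, m−2l+1} · A(m, l), where c_{n,r} = ((n−r−2)(n−r)(n−r+2))/((n+r)(n+r+2)(n+r+4)). -/
open MeasureTheory Real

/-- The unnormalized sine cardinal function. -/
noncomputable def sinc (t : ℝ) : ℝ := if t = 0 then 1 else Real.sin t / t

/-- The Laplace–Pólya integral `J_n(r)`. -/
noncomputable def J (n : ℕ) (r : ℝ) : ℝ :=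
  (1 / Real.pi) * ∫ t : ℝ, _root_.sinc t ^ n * Real.cos (r * t)

/-- The Eulerian numbers of the first kind,
`A(m,l) = ∑_{i=0}^{l} (-1)^i C(m+1,i) (l-i)^m`. -/
def eulerianA (m l : ℕ) : ℤ :=
  ∑ i ∈ Finset.range (l + 1), (-1) ^ i * (Nat.choose (m + 1) i : ℤ) * ((l : ℤ) - i) ^ m

lemma eulerianA_rec (m l : ℕ) :
    eulerianA (m+1) (l+1) =
      ((l:ℤ)+1) * eulerianA m (l+1) + ((m:ℤ)+1-l) * eulerianA m l := by
  have hpeel : ∀ (c : ℕ) (f : ℕ → ℤ),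
      (∑ i ∈ Finset.range (c+1), f i) = (∑ i ∈ Finset.range c, f (i+1)) + f 0 :=
    fun c f => Finset.sum_range_succ' f c
  have hbase : ∀ i : ℕ, (((l:ℤ)+1) - ((i:ℤ)+1))^m = ((l:ℤ) - i)^m := by
    intro i; ring_nf
  have hT1 : (∑ i ∈ Finset.range (l+2),
        (-1:ℤ)^i * (Nat.choose (m+2) i : ℤ) * (((l:ℤ)+1) - i)^m)
      = eulerianA m (l+1) - eulerianA m l := by
    rw [hpeel]
    have h2 : eulerianA m (l+1)
        = (∑ i ∈ Finset.range (l+1),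
            (-1:ℤ)^(i+1) * (Nat.choose (m+1) (i+1) : ℤ) * ((l:ℤ) - i)^m)
          + ((l:ℤ)+1)^m := by
      unfold eulerianA
      rw [hpeel]
      push_cast
      simp only [hbase]
      norm_num
    have hsplit : ∀ i : ℕ,
        (-1:ℤ)^(i+1) * (Nat.choose (m+2) (i+1) : ℤ) * (((l:ℤ)+1) - ((i:ℤ)+1))^m
        = (-1:ℤ)^(i+1) * (Nat.choose (m+1) (i+1) : ℤ) * ((l:ℤ) - i)^m
          - (-1:ℤ)^i * (Nat.choose (m+1) i : ℤ) * ((l:ℤ) - i)^m := by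
      intro i
      have h : Nat.choose (m+2) (i+1) = Nat.choose (m+1) i + Nat.choose (m+1) (i+1) :=
        Nat.choose_succ_succ (m+1) i
      rw [h, hbase]
      push_cast
      ring
    push_cast
    simp only [hsplit]
    rw [Finset.sum_sub_distrib, h2]
    unfold eulerianA
    push_cast
    simp only [Nat.choose_zero_right, Nat.cast_one, sub_zero]
    ring
  have hT2 : (∑ i ∈ Finset.range (l+2),
        (-1:ℤ)^i * (i:ℤ) * (Nat.choose (m+2) i : ℤ) * (((l:ℤ)+1) - i)^m)
      = -((m:ℤ)+2) * eulerianA m l := by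
    rw [hpeel]
    have hstep : ∀ i : ℕ,
        (-1:ℤ)^(i+1) * ((i:ℤ)+1) * (Nat.choose (m+2) (i+1) : ℤ) * (((l:ℤ)+1) - ((i:ℤ)+1))^m
        = -((m:ℤ)+2) * ((-1:ℤ)^i * (Nat.choose (m+1) i : ℤ) * ((l:ℤ) - i)^m) := by
      intro i
      have h' : ((m:ℤ)+2) * (Nat.choose (m+1) i : ℤ)
          = (Nat.choose (m+2) (i+1) : ℤ) * ((i:ℤ)+1) := by
        exact_mod_cast congrArg (Nat.cast : ℕ → ℤ) (Nat.add_one_mul_choose_eq (m+1) i)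
      rw [hbase]
      linear_combination ((-1:ℤ))^i * ((l:ℤ)-i)^m * h'
    push_cast
    simp only [hstep]
    rw [← Finset.mul_sum]
    unfold eulerianA
    push_cast
    norm_num
  have hmain : eulerianA (m+1) (l+1)
      = ((l:ℤ)+1) * (∑ i ∈ Finset.range (l+2),
          (-1:ℤ)^i * (Nat.choose (m+2) i : ℤ) * (((l:ℤ)+1) - i)^m)
        - (∑ i ∈ Finset.range (l+2),
          (-1:ℤ)^i * (i:ℤ) * (Nat.choose (m+2) i : ℤ) * (((l:ℤ)+1) - i)^m) := by
    unfold eulerianA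
    rw [Finset.mul_sum, ← Finset.sum_sub_distrib]
    apply Finset.sum_congr rfl
    intro i _
    push_cast
    ring
  rw [hmain, hT1, hT2]
  ring

lemma eulerianA_zero_right (m : ℕ) : eulerianA (m+1) 0 = 0 := by
  simp [eulerianA]

lemma eulerianA_zero_m (l : ℕ) : eulerianA 0 (l+1) = 0 := by
  unfold eulerianA
  induction l with
  | zero => decide
  | succ n ih =>
    rw [Finset.sum_range_succ]
    have h0 : Nat.choose 1 (n+1+1) = 0 := Nat.choose_eq_zero_of_lt (by omega)
    simp only [h0, Nat.cast_zero, mul_zero, zero_mul, add_zero, pow_zero, mul_one] at *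
    convert ih using 2 <;> simp [pow_zero]

lemma eulerianA_vanish : ∀ m l : ℕ, m + 1 ≤ l → eulerianA m l = 0 := by
  intro m
  induction m with
  | zero =>
    intro l hl
    obtain ⟨j, rfl⟩ : ∃ j, l = j + 1 := ⟨l - 1, by omega⟩
    exact eulerianA_zero_m j
  | succ n ih =>
    intro l hl
    obtain ⟨j, rfl⟩ : ∃ j, l = j + 1 := ⟨l - 1, by omega⟩
    rw [eulerianA_rec, ih (j+1) (by omega), ih j (by omega)]
    ring

lemma eulerianA_nonneg : ∀ m l : ℕ, 0 ≤ eulerianA m l := by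
  intro m
  induction m with
  | zero =>
    intro l
    cases l with
    | zero => decide
    | succ n => rw [eulerianA_zero_m]
  | succ n ih =>
    intro l
    cases l with
    | zero => rw [eulerianA_zero_right]
    | succ j =>
      rw [eulerianA_rec]
      rcases le_or_gt j (n+1) with h | h
      · have c1 : (0:ℤ) ≤ (j:ℤ)+1 := by positivity
        have c2 : (0:ℤ) ≤ (n:ℤ)+1-j := by
          have : (j:ℤ) ≤ (n:ℤ)+1 := by exact_mod_cast h
          linarith
        have := ih (j+1); have := ih j
        nlinarith
      · rw [eulerianA_vanish n (j+1) (by omega), eulerianA_vanish n j (by omega)]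
        simp

lemma eulerianA_symm : ∀ m l : ℕ, 1 ≤ m → l ≤ m + 1 →
    eulerianA m l = eulerianA m (m + 1 - l) := by
  intro m
  induction m with
  | zero => omega
  | succ n ih =>
    intro l _ hl
    cases l with
    | zero =>
      rw [eulerianA_zero_right, eulerianA_vanish (n+1) (n+1+1-0) (by omega)]
    | succ k =>
      rcases Nat.lt_or_ge k (n+1) with hk | hk
      · -- k ≤ n
        have hk' : k ≤ n := by omega
        have hidx : n + 1 + 1 - (k+1) = (n - k) + 1 := by omega
        rw [hidx, eulerianA_rec, eulerianA_rec]
        rcases Nat.eq_zero_or_pos n with rfl | hn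
        · -- n = 0 : k = 0
          interval_cases k
          norm_num
        · have e1 : eulerianA n (k+1) = eulerianA n (n - k) := by
            rcases Nat.lt_or_ge k n with h2 | h2
            · have := ih (k+1) hn (by omega)
              rwa [show n + 1 - (k+1) = n - k by omega] at this
            · -- k = n
              have hkn : k = n := by omega
              subst hkn
              obtain ⟨t, rfl⟩ : ∃ t, k = t + 1 := ⟨k - 1, by omega⟩
              rw [show t + 1 - (t+1) = 0 by omega,
                eulerianA_vanish (t+1) (t+1+1) (by omega), eulerianA_zero_right]
          have e2 : eulerianA n k = eulerianA n ((n - k) + 1) := by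
            have := ih k hn (by omega)
            rwa [show n + 1 - k = (n - k) + 1 by omega] at this
          rw [e1, e2]
          have c1 : ((n - k : ℕ) : ℤ) = (n:ℤ) - k := by
            push_cast [Nat.cast_sub hk']; ring
          rw [c1]
          ring
      · -- k + 1 = n + 2
        have : k = n + 1 := by omega
        subst this
        rw [show n + 1 + 1 - (n + 1 + 1) = 0 by omega,
          eulerianA_zero_right, eulerianA_vanish (n+1) (n+2) (by omega)]

lemma main_int : ∀ m l : ℕ, 2 ≤ l → 2*(l:ℤ) - 1 ≤ (m:ℤ) →
    ((m:ℤ)-l+1)*((m:ℤ)-l+2)*((m:ℤ)-l+3) * eulerianA m (l-1)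
      ≤ ((l:ℤ)-1)*(l:ℤ)*((l:ℤ)+1) * eulerianA m l := by
  intro m
  induction m using Nat.strong_induction_on with
  | _ m IH =>
    intro l hl hm
    obtain ⟨k, rfl⟩ : ∃ k, l = k + 2 := ⟨l - 2, by omega⟩
    have hm' : 2*k + 3 ≤ m := by
      have : 2*((k:ℤ)+2) - 1 ≤ (m:ℤ) := by push_cast at hm ⊢; linarith
      omega
    obtain ⟨M, rfl⟩ : ∃ M, m = M + 1 := ⟨m - 1, by omega⟩
    have hM : 2*k + 2 ≤ M := by omega
    have hp : 0 ≤ eulerianA M (k+2) := eulerianA_nonneg M (k+2)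
    have hq : 0 ≤ eulerianA M (k+1) := eulerianA_nonneg M (k+1)
    have hr : 0 ≤ eulerianA M k := eulerianA_nonneg M k
    have hrec1 : eulerianA (M+1) (k+2)
        = ((k:ℤ)+2) * eulerianA M (k+2) + ((M:ℤ)-k) * eulerianA M (k+1) := by
      have := eulerianA_rec M (k+1)
      rw [this]; push_cast; ring
    have hrec0 : eulerianA (M+1) (k+1)
        = ((k:ℤ)+1) * eulerianA M (k+1) + ((M:ℤ)+1-k) * eulerianA M k :=
      eulerianA_rec M k
    have h2 : ((M:ℤ)-k)*((M:ℤ)-k+1)*((M:ℤ)-k+2) * eulerianA M k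
        ≤ (k:ℤ)*((k:ℤ)+1)*((k:ℤ)+2) * eulerianA M (k+1) := by
      cases k with
      | zero =>
        obtain ⟨N, rfl⟩ : ∃ N, M = N + 1 := ⟨M - 1, by omega⟩
        rw [eulerianA_zero_right]
        norm_num
      | succ k' =>
        have h := IH M (by omega) (k' + 2) (by omega) (by push_cast; omega)
        rw [show (k' + 2) - 1 = k' + 1 from rfl] at h
        rw [show k' + 1 + 1 = k' + 2 by omega]
        push_cast at h ⊢
        linarith [h]
    rw [show (k + 2) - 1 = k + 1 from rfl, hrec1, hrec0]
    rcases eq_or_lt_of_le hM with hMe | hMl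
    · -- M = 2k+2 : boundary case, uses symmetry p = q
      have hpq : eulerianA M (k+2) = eulerianA M (k+1) := by
        have h := eulerianA_symm M (k+1) (by omega) (by omega)
        rw [show M + 1 - (k+1) = k + 2 by omega] at h
        exact h.symm
      have F2 := mul_le_mul_of_nonneg_left h2 (by positivity : (0:ℤ) ≤ (k:ℤ)+3)
      rw [hpq]
      subst hMe
      push_cast at F2 ⊢
      linarith only [F2]
    · -- M ≥ 2k+3
      have hMl' : 2*k + 3 ≤ M := hMl
      have h1 : ((M:ℤ)-(k:ℤ)-1)*((M:ℤ)-k)*((M:ℤ)-k+1) * eulerianA M (k+1)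
          ≤ ((k:ℤ)+1)*((k:ℤ)+2)*((k:ℤ)+3) * eulerianA M (k+2) := by
        have h := IH M (by omega) (k + 2) (by omega) (by push_cast; omega)
        rw [show (k + 2) - 1 = k + 1 from rfl] at h
        push_cast at h ⊢
        linarith [h]
      have F1 := mul_le_mul_of_nonneg_left h1 (by positivity : (0:ℤ) ≤ (k:ℤ)+2)
      have F2 := mul_le_mul_of_nonneg_left h2 (by push_cast; omega : (0:ℤ) ≤ (M:ℤ)-(k:ℤ)+1)
      have F3 : 0 ≤ ((M:ℤ)-2*(k:ℤ)-2)*((M:ℤ)-2*(k:ℤ)-1)*((M:ℤ)-2*(k:ℤ)) * eulerianA M (k+1) := by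
        apply mul_nonneg _ hq
        apply mul_nonneg (mul_nonneg _ _) <;> push_cast <;> omega
      push_cast at F1 F2 F3 ⊢
      linarith only [F1, F2, F3]

theorem stmt_4 (m l : ℕ) (hl : 2 ≤ l) (hm : 2 * (l : ℤ) - 1 ≤ (m : ℤ)) :
    (eulerianA m (l - 1) : ℝ) ≤
      ((((m : ℝ) + 1) - ((m : ℝ) - 2 * l + 1) - 2) * (((m : ℝ) + 1) - ((m : ℝ) - 2 * l + 1)) *
          (((m : ℝ) + 1) - ((m : ℝ) - 2 * l + 1) + 2)) /
        ((((m : ℝ) + 1) + ((m : ℝ) - 2 * l + 1)) * (((m : ℝ) + 1) + ((m : ℝ) - 2 * l + 1) + 2) *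
          (((m : ℝ) + 1) + ((m : ℝ) - 2 * l + 1) + 4)) *
        (eulerianA m l : ℝ) := by
  have hZ := main_int m l hl hm
  have hml : 2 * l - 1 ≤ m := by omega
  have hl' : (2:ℝ) ≤ (l:ℝ) := by exact_mod_cast hl
  have hm' : 2 * (l:ℝ) - 1 ≤ (m:ℝ) := by exact_mod_cast hm
  have hR : ((m:ℝ)-l+1)*((m:ℝ)-l+2)*((m:ℝ)-l+3) * (eulerianA m (l-1) : ℝ)
      ≤ ((l:ℝ)-1)*(l:ℝ)*((l:ℝ)+1) * (eulerianA m l : ℝ) := by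
    exact_mod_cast hZ
  have hd1 : (0:ℝ) < ((m:ℝ)+1) + ((m:ℝ) - 2*l + 1) := by linarith
  have hd2 : (0:ℝ) < ((m:ℝ)+1) + ((m:ℝ) - 2*l + 1) + 2 := by linarith
  have hd3 : (0:ℝ) < ((m:ℝ)+1) + ((m:ℝ) - 2*l + 1) + 4 := by linarith
  have hden : (0:ℝ) < (((m:ℝ)+1) + ((m:ℝ) - 2*l + 1)) * (((m:ℝ)+1) + ((m:ℝ) - 2*l + 1) + 2) *
      (((m:ℝ)+1) + ((m:ℝ) - 2*l + 1) + 4) := by positivity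
  rw [div_mul_eq_mul_div, le_div_iff₀ hden]
  nlinarith [hR]
end

section
/- For all integers l ≥ 2 and μ ≥ l+1, the strict inequality ((l−1)·l·(l+1))/((μ−1)·μ·(μ+1)) · ((μ−2)/μ)^l < ((μ−2)/μ)^μ holds. (Equivalently, for l ≥ 2 and m ≥ 2l−1, the bound c_{m+1,m−2l+1} = ((l−1)l(l+1))/((m−l+1)(m−l+2)(m−l+3)) is strictly smaller than the Lesieur–Nicolas bound ((m−l)/(m−l+2))^{m−2l+2}.) -/
open MeasureTheory Real

lemma aux_pow_bound (n : ℕ) : ∀ m : ℝ, (n : ℝ) + 2 ≤ m →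
    (m - n) * (m - n - 1) ≤ ((m - 2) / m) ^ n * (m * (m - 1)) := by
  induction n with
  | zero => intro m hm; push_cast at hm ⊢; simp
  | succ n ih =>
    intro m hm
    push_cast at hm ⊢
    have hn : (0:ℝ) ≤ n := Nat.cast_nonneg n
    have hm0 : (0:ℝ) < m := by linarith
    have h1 := ih m (by linarith)
    have hx : (0:ℝ) ≤ (m - 2) / m := by
      apply div_nonneg <;> linarith
    have key : (m - (n+1)) * (m - (n+1) - 1) ≤ ((m - 2) / m) * ((m - n) * (m - n - 1)) := by
      rw [div_mul_eq_mul_div, le_div_iff₀ hm0]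
      nlinarith
    calc (m - (n+1)) * (m - (n+1) - 1)
        ≤ ((m - 2) / m) * ((m - n) * (m - n - 1)) := key
      _ ≤ ((m - 2) / m) * (((m - 2) / m) ^ n * (m * (m - 1))) :=
          mul_le_mul_of_nonneg_left h1 hx
      _ = ((m - 2) / m) ^ (n + 1) * (m * (m - 1)) := by ring

theorem stmt_12 (l μ : ℕ) (hl : 2 ≤ l) (hμ : l + 1 ≤ μ) :
    (((l : ℝ) - 1) * l * ((l : ℝ) + 1)) / (((μ : ℝ) - 1) * μ * ((μ : ℝ) + 1)) *
        (((μ : ℝ) - 2) / μ) ^ l <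
      (((μ : ℝ) - 2) / μ) ^ μ := by
  have hlμ : l ≤ μ := by omega
  have hlr : (2:ℝ) ≤ l := by exact_mod_cast hl
  have hμr : (l:ℝ) + 1 ≤ μ := by exact_mod_cast hμ
  have hμ0 : (0:ℝ) < μ := by linarith
  have hμ2 : (0:ℝ) < (μ:ℝ) - 2 := by linarith
  set x : ℝ := ((μ:ℝ) - 2) / μ with hxdef
  have hx0 : 0 < x := div_pos hμ2 hμ0
  have hcast : ((μ - l : ℕ) : ℝ) = (μ:ℝ) - l := by
    push_cast [Nat.cast_sub hlμ]; ring
  have hb := aux_pow_bound (μ - l) μ (by rw [hcast]; linarith)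
  rw [hcast] at hb
  -- hb : ((μ:ℝ) - ((μ:ℝ)-l)) * ((μ:ℝ) - ((μ:ℝ)-l) - 1) ≤ x ^ (μ - l) * (μ * (μ - 1))
  have hb' : ((l:ℝ)) * ((l:ℝ) - 1) ≤ x ^ (μ - l) * ((μ:ℝ) * ((μ:ℝ) - 1)) := by
    have : (μ:ℝ) - ((μ:ℝ) - l) = l := by ring
    calc ((l:ℝ)) * ((l:ℝ) - 1) = ((μ:ℝ) - ((μ:ℝ)-l)) * ((μ:ℝ) - ((μ:ℝ)-l) - 1) := by ring
      _ ≤ _ := hb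
  have hsplit : x ^ μ = x ^ l * x ^ (μ - l) := by
    rw [← pow_add]; congr 1; omega
  rw [hsplit]
  have hxl : (0:ℝ) < x ^ l := pow_pos hx0 l
  rw [mul_comm (x ^ l) (x ^ (μ - l))]
  apply mul_lt_mul_of_pos_right _ hxl
  -- goal: (l-1)*l*(l+1) / ((μ-1)*μ*(μ+1)) < x ^ (μ - l)
  have hden : (0:ℝ) < ((μ:ℝ) - 1) * μ * ((μ:ℝ) + 1) :=
    mul_pos (mul_pos (by linarith) hμ0) (by linarith)
  rw [div_lt_iff₀ hden]
  have h2 : (l:ℝ) * ((l:ℝ) - 1) * ((μ:ℝ) + 1) ≤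
      x ^ (μ - l) * ((μ:ℝ) * ((μ:ℝ) - 1)) * ((μ:ℝ) + 1) :=
    mul_le_mul_of_nonneg_right hb' (by linarith)
  have h3 : ((l:ℝ) - 1) * l * ((l:ℝ) + 1) < (l:ℝ) * ((l:ℝ) - 1) * ((μ:ℝ) + 1) := by
    nlinarith [mul_pos (mul_pos (show (0:ℝ) < l by linarith) (show (0:ℝ) < (l:ℝ) - 1 by linarith))
      (show (0:ℝ) < (μ:ℝ) - l by linarith)]
  linarith
end
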